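/- For every real number λ > 1 there exists a real number s > 0 such that the sequence n ↦ ρ(M_{T_{1,n,n}}(s)) converges to λ as n → ∞. In particular, every real number greater than 1 is an s-deformed Laplacian limit point for some s > 0. -/

import Mathlib

open Filter Topology

/-- The deformed Laplacian matrix `M_G(s) = I - s·A + s²·(D - I)` of a finite simple graph. -/
noncomputable def defLap {V : Type*} [Fintype V] [DecidableEq V] (G : SimpleGraph V) (s : ℝ) :
    Matrix V V ℝ :=
  letI := Classical.decRel G.Adj
  (1 : Matrix V V ℝ) - s • (G.adjMatrix ℝ) +
    s ^ 2 • (Matrix.diagonal (fun v => (G.degree v : ℝ)) - 1)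

/-- The largest (real) eigenvalue of a matrix. -/
noncomputable def lamMax {V : Type*} [Fintype V] (M : Matrix V V ℝ) : ℝ :=
  sSup {μ : ℝ | ∃ v : V → ℝ, v ≠ 0 ∧ M.mulVec v = μ • v}

/-- The starlike tree `T_{1,n,n}`: vertex `0` is the center, vertex `1` is a pendant vertex,
vertices `2,…,n+1` and `n+2,…,2n+1` form two pendant paths on `n` vertices each. -/
def T1nn (n : ℕ) : SimpleGraph (Fin (2 * n + 2)) :=
  SimpleGraph.fromRel (fun i j =>
    ((i : ℕ) = 0 ∧ (j : ℕ) = 1) ∨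
    ((i : ℕ) = 0 ∧ (j : ℕ) = 2) ∨
    ((i : ℕ) = 0 ∧ (j : ℕ) = n + 2) ∨
    (2 ≤ (i : ℕ) ∧ (i : ℕ) < n + 1 ∧ (j : ℕ) = (i : ℕ) + 1) ∨
    (n + 2 ≤ (i : ℕ) ∧ (i : ℕ) < 2 * n + 1 ∧ (j : ℕ) = (i : ℕ) + 1))

open Finset Matrix

def R (n a b : ℕ) : Prop :=
  (a = 0 ∧ b = 1) ∨ (a = 0 ∧ b = 2) ∨ (a = 0 ∧ b = n + 2) ∨
  (2 ≤ a ∧ a < n + 1 ∧ b = a + 1) ∨ (n + 2 ≤ a ∧ a < 2 * n + 1 ∧ b = a + 1)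

instance (n a b : ℕ) : Decidable (R n a b) := by unfold R; infer_instance

lemma sum_R (n : ℕ) (hn : 1 ≤ n) (g : ℕ → ℕ → ℝ) :
    (∑ a ∈ range (2*n+2), ∑ b ∈ range (2*n+2), if R n a b then g a b else 0)
    = g 0 1 + g 0 2 + g 0 (n+2) + (∑ k ∈ Ico 2 (n+1), g k (k+1))
      + ∑ k ∈ Ico (n+2) (2*n+1), g k (k+1) := by
  have hsplit : ∀ a b : ℕ, (if R n a b then g a b else 0) =
      (if a = 0 ∧ b = 1 then g a b else 0) + (if a = 0 ∧ b = 2 then g a b else 0)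
      + (if a = 0 ∧ b = n+2 then g a b else 0)
      + (if (2 ≤ a ∧ a < n+1) ∧ b = a+1 then g a b else 0)
      + (if (n+2 ≤ a ∧ a < 2*n+1) ∧ b = a+1 then g a b else 0) := by
    intro a b
    by_cases hR : R n a b
    · rw [if_pos hR]; unfold R at hR; split_ifs <;> first | ring1 | (exfalso; omega)
    · rw [if_neg hR]; unfold R at hR; split_ifs <;> first | ring1 | (exfalso; omega)
  simp only [hsplit, Finset.sum_add_distrib]
  have h1 : ∀ c : ℕ, c < 2*n+2 →
      (∑ a ∈ range (2*n+2), ∑ b ∈ range (2*n+2), if a = 0 ∧ b = c then g a b else 0) = g 0 c := by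
    intro c hc
    have e1 : ∀ a ∈ range (2*n+2), (∑ b ∈ range (2*n+2), if a = 0 ∧ b = c then g a b else 0)
        = if a = 0 then g a c else 0 := by
      intro a _
      by_cases ha : a = 0
      · simp only [ha, true_and, if_true]
        rw [Finset.sum_ite_eq' (range (2*n+2)) c]
        rw [if_pos (Finset.mem_range.mpr hc)]
      · simp [ha]
    rw [Finset.sum_congr rfl e1, Finset.sum_ite_eq' (range (2*n+2)) (0:ℕ)]
    rw [if_pos (Finset.mem_range.mpr (by omega))]
  have h2 : ∀ lo hi : ℕ, hi < 2*n+2 → 2 ≤ lo →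
      (∑ a ∈ range (2*n+2), ∑ b ∈ range (2*n+2), if (lo ≤ a ∧ a < hi) ∧ b = a+1 then g a b else 0)
      = ∑ k ∈ Ico lo hi, g k (k+1) := by
    intro lo hi hhi hlo
    have e1 : ∀ a ∈ range (2*n+2), (∑ b ∈ range (2*n+2), if (lo ≤ a ∧ a < hi) ∧ b = a+1 then g a b else 0)
        = if lo ≤ a ∧ a < hi then g a (a+1) else 0 := by
      intro a _
      by_cases ha : lo ≤ a ∧ a < hi
      · simp only [ha, true_and, if_true]
        rw [Finset.sum_ite_eq' (range (2*n+2)) (a+1)]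
        rw [if_pos (Finset.mem_range.mpr (by omega))]
      · simp [ha]
    rw [Finset.sum_congr rfl e1, ← Finset.sum_filter]
    apply Finset.sum_congr _ (fun _ _ => rfl)
    ext k
    simp only [Finset.mem_filter, Finset.mem_range, Finset.mem_Ico]
    omega
  rw [h1 1 (by omega), h1 2 (by omega), h1 (n+2) (by omega),
      h2 2 (n+1) (by omega) (by omega), h2 (n+2) (2*n+1) (by omega) (by omega)]

open scoped Classical in
lemma adj_iff (n : ℕ) (i j : Fin (2*n+2)) :
    (T1nn n).Adj i j ↔ R n ↑i ↑j ∨ R n ↑j ↑i := by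
  rw [T1nn, SimpleGraph.fromRel_adj]
  unfold R
  constructor
  · rintro ⟨-, h⟩; exact h
  · intro h
    refine ⟨fun e => ?_, h⟩
    have : (i : ℕ) = (j : ℕ) := by rw [e]
    omega

noncomputable def ES (n : ℕ) (h : ℕ → ℕ → ℝ) : ℝ :=
  h 0 1 + h 0 2 + h 0 (n+2) + (∑ k ∈ Ico 2 (n+1), h k (k+1))
    + ∑ k ∈ Ico (n+2) (2*n+1), h k (k+1)

open scoped Classical in
lemma adjSum (n : ℕ) (hn : 1 ≤ n) (f : ℕ → ℕ → ℝ) :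
    (∑ i : Fin (2*n+2), ∑ j : Fin (2*n+2), if (T1nn n).Adj i j then f ↑i ↑j else 0)
    = ES n f + ES n (fun a b => f b a) := by
  have key : ∀ i j : Fin (2*n+2), (if (T1nn n).Adj i j then f ↑i ↑j else 0)
      = (if R n ↑i ↑j then f ↑i ↑j else 0) + (if R n ↑j ↑i then f ↑i ↑j else 0) := by
    intro i j
    by_cases h1 : R n ↑i ↑j
    · have h2 : ¬ R n ↑j ↑i := by unfold R at h1 ⊢; omega
      rw [if_pos ((adj_iff n i j).mpr (Or.inl h1)), if_pos h1, if_neg h2, add_zero]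
    · by_cases h2 : R n ↑j ↑i
      · rw [if_pos ((adj_iff n i j).mpr (Or.inr h2)), if_neg h1, if_pos h2, zero_add]
      · rw [if_neg (fun h => by rcases (adj_iff n i j).mp h with h | h <;> tauto),
           if_neg h1, if_neg h2, add_zero]
  simp only [key, Finset.sum_add_distrib]
  congr 1
  · have e1 : ∀ i : Fin (2*n+2), (∑ j : Fin (2*n+2), if R n ↑i ↑j then f ↑i ↑j else 0)
        = ∑ b ∈ range (2*n+2), if R n ↑i b then f ↑i b else 0 := by
      intro i; exact Fin.sum_univ_eq_sum_range (fun b => if R n (i:ℕ) b then f (i:ℕ) b else 0) (2*n+2)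
    rw [Finset.sum_congr rfl (fun i _ => e1 i),
        Fin.sum_univ_eq_sum_range (fun a => ∑ b ∈ range (2*n+2), if R n a b then f a b else 0) (2*n+2),
        sum_R n hn f]
    rfl
  · rw [Finset.sum_comm]
    have e1 : ∀ j : Fin (2*n+2), (∑ i : Fin (2*n+2), if R n ↑j ↑i then f ↑i ↑j else 0)
        = ∑ b ∈ range (2*n+2), if R n ↑j b then f b ↑j else 0 := by
      intro j; exact Fin.sum_univ_eq_sum_range (fun b => if R n (j:ℕ) b then f b (j:ℕ) else 0) (2*n+2)
    rw [Finset.sum_congr rfl (fun j _ => e1 j),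
        Fin.sum_univ_eq_sum_range (fun a => ∑ b ∈ range (2*n+2), if R n a b then f b a else 0) (2*n+2),
        sum_R n hn (fun a b => f b a)]
    rfl


open scoped Classical in
lemma quad_form (n : ℕ) (hn : 1 ≤ n) (s : ℝ) (y : ℕ → ℝ) :
    (fun i : Fin (2*n+2) => y ↑i) ⬝ᵥ (defLap (T1nn n) s).mulVec (fun i : Fin (2*n+2) => y ↑i)
    = (1 - s^2) * (∑ k ∈ range (2*n+2), y k ^ 2)
      + s^2 * (ES n (fun a b => y a ^ 2) + ES n (fun a b => y b ^ 2))
      - s * (2 * ES n (fun a b => y a * y b)) := by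
  classical
  set x : Fin (2*n+2) → ℝ := fun i => y ↑i with hx
  rw [defLap]
  rw [Matrix.add_mulVec, Matrix.sub_mulVec, Matrix.smul_mulVec, Matrix.smul_mulVec,
      Matrix.one_mulVec, Matrix.sub_mulVec, Matrix.one_mulVec,
      dotProduct_add, dotProduct_sub, dotProduct_smul,
      dotProduct_smul, dotProduct_sub]
  have hself : x ⬝ᵥ x = ∑ k ∈ range (2*n+2), y k ^ 2 := by
    rw [dotProduct]
    rw [← Fin.sum_univ_eq_sum_range (fun k => y k ^ 2) (2*n+2)]
    exact Finset.sum_congr rfl (fun i _ => by rw [hx]; ring)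
  have hA : x ⬝ᵥ ((T1nn n).adjMatrix ℝ).mulVec x = 2 * ES n (fun a b => y a * y b) := by
    rw [dotProduct]
    have e1 : ∀ i : Fin (2*n+2), x i * ((T1nn n).adjMatrix ℝ).mulVec x i
        = ∑ j : Fin (2*n+2), if (T1nn n).Adj i j then y ↑i * y ↑j else 0 := by
      intro i
      rw [Matrix.mulVec, dotProduct, Finset.mul_sum]
      refine Finset.sum_congr rfl (fun j _ => ?_)
      rw [SimpleGraph.adjMatrix_apply]
      split_ifs <;> simp [hx]
    rw [Finset.sum_congr rfl (fun i _ => e1 i), adjSum n hn (fun a b => y a * y b)]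
    have e2 : ES n (fun a b => y b * y a) = ES n (fun a b => y a * y b) := by
      unfold ES
      rw [Finset.sum_congr rfl (fun k _ => mul_comm (y (k+1)) (y k)),
          Finset.sum_congr (rfl : Ico (n+2) (2*n+1) = _) (fun k _ => mul_comm (y (k+1)) (y k))]
      ring
    rw [e2]; ring
  have hD : x ⬝ᵥ (Matrix.diagonal (fun v => ((T1nn n).degree v : ℝ))).mulVec x
      = ES n (fun a b => y a ^ 2) + ES n (fun a b => y b ^ 2) := by
    rw [dotProduct]
    have e1 : ∀ i : Fin (2*n+2), x i * (Matrix.diagonal (fun v => ((T1nn n).degree v : ℝ))).mulVec x i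
        = ∑ j : Fin (2*n+2), if (T1nn n).Adj i j then y ↑i ^ 2 else 0 := by
      intro i
      rw [Matrix.mulVec_diagonal]
      have hdeg : (((T1nn n).degree i : ℕ) : ℝ)
          = ∑ j : Fin (2*n+2), if (T1nn n).Adj i j then (1:ℝ) else 0 := by
        rw [SimpleGraph.degree, SimpleGraph.neighborFinset_eq_filter, Finset.card_filter]
        push_cast
        exact Finset.sum_congr rfl (fun j _ => by split_ifs <;> simp)
      rw [hdeg, Finset.sum_mul, Finset.mul_sum]
      refine Finset.sum_congr rfl (fun j _ => ?_)
      split_ifs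
      · rw [hx]; ring
      · simp
    rw [Finset.sum_congr rfl (fun i _ => e1 i), adjSum n hn (fun a b => y a ^ 2)]
  rw [hself, hA, hD]
  simp only [smul_eq_mul]
  ring


lemma master (n : ℕ) (hn : 1 ≤ n) (lam s r p : ℝ) (hs : s ≠ 0) (hr : r ≠ 0) (hp0 : p ≠ 0)
    (hE1 : lam - 1 = s^2 + s*r + s/r)
    (hspE : s*p = 2*s^2 + 2*s*r - (lam-1))
    (hv : s/(-p) = lam - 1)
    (y : ℕ → ℝ) :
    (lam - 1 + s^2) * (∑ k ∈ range (2*n+2), y k ^ 2)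
      + s * (2 * ES n (fun a b => y a * y b))
      - s^2 * (ES n (fun a b => y a ^ 2) + ES n (fun a b => y b ^ 2))
    = (s/(-p)) * (p*y 0 - y 1)^2 + (s/r)*(r*y 0 + y 2)^2 + (s/r)*(r*y 0 + y (n+2))^2
      + (∑ k ∈ Ico 2 (n+1), (s/r)*(r*y k + y (k+1))^2)
      + (∑ k ∈ Ico (n+2) (2*n+1), (s/r)*(r*y k + y (k+1))^2)
      + (lam - 1 - s/r) * (y (n+1)^2 + y (2*n+1)^2) := by
  have shift : ∀ m M : ℕ, (∑ k ∈ Ico m M, y (k+1)^2) = ∑ k ∈ Ico (m+1) (M+1), y k^2 := by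
    intro m M
    rw [Finset.sum_Ico_eq_sum_range, Finset.sum_Ico_eq_sum_range, Nat.succ_sub_succ]
    exact Finset.sum_congr rfl (fun k _ => by rw [Nat.add_right_comm])
  set A1 : ℝ := ∑ k ∈ Ico 2 (n+2), y k^2 with hA1
  set A2 : ℝ := ∑ k ∈ Ico (n+2) (2*n+2), y k^2 with hA2
  have hQ1 : (∑ k ∈ Ico 2 (n+1), y k^2) = A1 - y (n+1)^2 := by
    have h : A1 = (∑ k ∈ Ico 2 (n+1), y k^2) + y (n+1)^2 := by
      rw [hA1, show n+2 = (n+1)+1 by omega]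
      exact Finset.sum_Ico_succ_top (by omega) _
    linarith
  have hQ1' : (∑ k ∈ Ico 2 (n+1), y (k+1)^2) = A1 - y 2^2 := by
    have h : A1 = y 2^2 + ∑ k ∈ Ico 3 (n+2), y k^2 := by
      rw [hA1]
      exact Finset.sum_eq_sum_Ico_succ_bot (by omega) _
    have h2 : (∑ k ∈ Ico 2 (n+1), y (k+1)^2) = ∑ k ∈ Ico 3 (n+2), y k^2 := shift 2 (n+1)
    linarith
  have hQ2 : (∑ k ∈ Ico (n+2) (2*n+1), y k^2) = A2 - y (2*n+1)^2 := by
    have h : A2 = (∑ k ∈ Ico (n+2) (2*n+1), y k^2) + y (2*n+1)^2 := by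
      rw [hA2, show 2*n+2 = (2*n+1)+1 by omega]
      exact Finset.sum_Ico_succ_top (by omega) _
    linarith
  have hQ2' : (∑ k ∈ Ico (n+2) (2*n+1), y (k+1)^2) = A2 - y (n+2)^2 := by
    have h : A2 = y (n+2)^2 + ∑ k ∈ Ico (n+3) (2*n+2), y k^2 := by
      rw [hA2]
      exact Finset.sum_eq_sum_Ico_succ_bot (by omega) _
    have h2 : (∑ k ∈ Ico (n+2) (2*n+1), y (k+1)^2) = ∑ k ∈ Ico (n+3) (2*n+2), y k^2 := by
      rw [shift (n+2) (2*n+1), show n+2+1 = n+3 by omega, show 2*n+1+1 = 2*n+2 by omega]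
    linarith
  have hsum0 : (∑ k ∈ range (2*n+2), y k ^ 2) = y 0^2 + y 1^2 + A1 + A2 := by
    rw [Finset.range_eq_Ico,
        ← Finset.sum_Ico_consecutive (fun k => y k^2) (show 0 ≤ n+2 by omega) (show n+2 ≤ 2*n+2 by omega),
        ← Finset.sum_Ico_consecutive (fun k => y k^2) (show 0 ≤ 2 by omega) (show 2 ≤ n+2 by omega),
        Finset.sum_eq_sum_Ico_succ_bot (show 0 < 2 by omega),
        Finset.sum_eq_sum_Ico_succ_bot (show 1 < 2 by omega),
        Finset.Ico_self, Finset.sum_empty, hA1, hA2]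
    ring
  have hedge : ∀ m M : ℕ, (∑ k ∈ Ico m M, (s/r)*(r*y k + y (k+1))^2)
      = s*r*(∑ k ∈ Ico m M, y k^2) + 2*s*(∑ k ∈ Ico m M, y k * y (k+1))
        + (s/r)*(∑ k ∈ Ico m M, y (k+1)^2) := by
    intro m M
    rw [Finset.mul_sum, Finset.mul_sum, Finset.mul_sum, ← Finset.sum_add_distrib,
        ← Finset.sum_add_distrib]
    refine Finset.sum_congr rfl (fun k _ => ?_)
    field_simp
    ring
  have hpend : (s/(-p)) * (p*y 0 - y 1)^2
      = -(s*p)*(y 0^2) + 2*s*(y 0 * y 1) + (s/(-p))*(y 1^2) := by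
    rw [div_neg]
    field_simp
    ring
  have hc1 : (s/r)*(r*y 0 + y 2)^2 = s*r*(y 0^2) + 2*s*(y 0 * y 2) + (s/r)*(y 2^2) := by
    field_simp; ring
  have hc2 : (s/r)*(r*y 0 + y (n+2))^2
      = s*r*(y 0^2) + 2*s*(y 0 * y (n+2)) + (s/r)*(y (n+2)^2) := by
    field_simp; ring
  unfold ES
  rw [hedge 2 (n+1), hedge (n+2) (2*n+1), hsum0, hQ1, hQ1', hQ2, hQ2', hpend, hc1, hc2]
  linear_combination y 0^2 * hspE - y 1^2 * hv
    + (A1 + A2 - y (n+1)^2 - y (2*n+1)^2) * hE1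


section spectral
open RCLike

lemma dot_self_pos {N : ℕ} {v : Fin N → ℝ} (hv : v ≠ 0) : 0 < v ⬝ᵥ v := by
  rcases (dotProduct_self_eq_zero (v := v)).not.mpr hv with h
  have h0 : 0 ≤ v ⬝ᵥ v := Finset.sum_nonneg (fun i _ => mul_self_nonneg (v i))
  rcases lt_or_eq_of_le h0 with h1 | h1
  · exact h1
  · exact absurd h1.symm h

lemma lamMax_le_of_ub {N : ℕ} (M : Matrix (Fin N) (Fin N) ℝ) (lam : ℝ) (hlam0 : 0 ≤ lam)
    (hub : ∀ x : Fin N → ℝ, x ⬝ᵥ M.mulVec x ≤ lam * (x ⬝ᵥ x)) :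
    lamMax M ≤ lam := by
  apply Real.sSup_le _ hlam0
  rintro μ ⟨v, hv, hev⟩
  have h1 : v ⬝ᵥ M.mulVec v = μ * (v ⬝ᵥ v) := by
    rw [hev, dotProduct_smul, smul_eq_mul]
  have h2 := hub v
  have h3 := dot_self_pos hv
  nlinarith [h2, h3]

lemma lamMax_ge_rayleigh {N : ℕ} (M : Matrix (Fin N) (Fin N) ℝ) (hsym : Mᵀ = M)
    (lam : ℝ) (hub : ∀ x : Fin N → ℝ, x ⬝ᵥ M.mulVec x ≤ lam * (x ⬝ᵥ x))
    (w : Fin N → ℝ) (hw : w ≠ 0) :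
    (w ⬝ᵥ M.mulVec w) / (w ⬝ᵥ w) ≤ lamMax M := by
  classical
  set E := EuclideanSpace ℝ (Fin N)
  haveI : Nonempty (Fin N) := by
    rcases Nat.eq_zero_or_pos N with h | h
    · subst h
      exact absurd (funext fun i => (Nat.not_lt_zero _ i.isLt).elim) hw
    · exact ⟨⟨0, h⟩⟩
  have hw'ne0 : ((WithLp.equiv 2 (Fin N → ℝ)).symm w : E) ≠ 0 := by
    intro h
    apply hw
    have := congrArg (WithLp.equiv 2 (Fin N → ℝ)) h
    simpa using this
  haveI : Nontrivial E := ⟨0, (WithLp.equiv 2 (Fin N → ℝ)).symm w, fun h => hw'ne0 h.symm⟩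
  set T : E →ₗ[ℝ] E := Matrix.toEuclideanLin M with hT
  have hTapp : ∀ x : E, T x = (WithLp.equiv 2 (Fin N → ℝ)).symm
      (M.mulVec (WithLp.equiv 2 (Fin N → ℝ) x)) := by
    intro x
    rw [hT, Matrix.toEuclideanLin_apply]
    rfl
  have hinner : ∀ u v : E, (inner ℝ u v : ℝ)
      = (WithLp.equiv 2 (Fin N → ℝ) u) ⬝ᵥ (WithLp.equiv 2 (Fin N → ℝ) v) := by
    intro u v
    rw [PiLp.inner_apply]
    exact Finset.sum_congr rfl (fun i _ => by simp [mul_comm])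
  have hTdot : ∀ x : E, (inner ℝ (T x) x : ℝ)
      = (WithLp.equiv 2 (Fin N → ℝ) x) ⬝ᵥ M.mulVec (WithLp.equiv 2 (Fin N → ℝ) x) := by
    intro x
    rw [hinner, hTapp]
    simp only [Equiv.apply_symm_apply]
    rw [dotProduct_comm]
  have hsymT : T.IsSymmetric := by
    intro x y
    rw [hinner, hinner, hTapp, hTapp]
    simp only [Equiv.apply_symm_apply]
    rw [dotProduct_comm, Matrix.dotProduct_mulVec, ← Matrix.mulVec_transpose, hsym,
        dotProduct_comm]
  have hnorm : ∀ x : E, ‖x‖^2 = (WithLp.equiv 2 (Fin N → ℝ) x) ⬝ᵥ (WithLp.equiv 2 (Fin N → ℝ) x) := by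
    intro x
    rw [← real_inner_self_eq_norm_sq, hinner]
  -- the Rayleigh eigenvalue
  set μ0 : ℝ := ⨆ x : { x : E // x ≠ 0 }, RCLike.re (inner ℝ (T x) (x : E) : ℝ) / ‖(x : E)‖ ^ 2 with hμ0
  have heig := hsymT.hasEigenvalue_iSup_of_finiteDimensional
  obtain ⟨v, hv⟩ := Module.End.HasEigenvalue.exists_hasEigenvector heig
  have hvne : v ≠ 0 := hv.right
  have hvec : T v = (μ0 : ℝ) • v := hv.apply_eq_smul
  -- μ0 ∈ spectrum set
  have hmem : μ0 ∈ {μ : ℝ | ∃ u : Fin N → ℝ, u ≠ 0 ∧ M.mulVec u = μ • u} := by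
    refine ⟨WithLp.equiv 2 (Fin N → ℝ) v, fun h => ?_, ?_⟩
    · apply hvne
      have := congrArg (WithLp.equiv 2 (Fin N → ℝ)).symm h
      simpa using this
    · have h := hvec
      rw [hTapp v] at h
      have h2 := congrArg (WithLp.equiv 2 (Fin N → ℝ)) h
      simp only [Equiv.apply_symm_apply] at h2
      exact h2
  have hbddS : BddAbove {μ : ℝ | ∃ u : Fin N → ℝ, u ≠ 0 ∧ M.mulVec u = μ • u} := by
    refine ⟨lam, ?_⟩
    rintro μ ⟨u, hu, hev⟩
    have h1 : u ⬝ᵥ M.mulVec u = μ * (u ⬝ᵥ u) := by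
      rw [hev, dotProduct_smul, smul_eq_mul]
    have h3 := dot_self_pos hu
    nlinarith [hub u]
  have hμ0_le : μ0 ≤ lamMax M := le_csSup hbddS hmem
  -- rayleigh at w ≤ μ0
  set w' : E := (WithLp.equiv 2 (Fin N → ℝ)).symm w with hw'
  have hw'ne : w' ≠ 0 := hw'ne0
  have hbddR : BddAbove (Set.range (fun x : { x : E // x ≠ 0 } =>
      RCLike.re (inner ℝ (T x) (x : E) : ℝ) / ‖(x : E)‖ ^ 2)) := by
    refine ⟨lam, ?_⟩
    rintro μ ⟨⟨x, hx⟩, rfl⟩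
    simp only
    have h3 : (0:ℝ) < ‖x‖^2 := by
      have : ‖x‖ ≠ 0 := fun h => hx (norm_eq_zero.mp h)
      positivity
    rw [div_le_iff₀ h3]
    have hre : RCLike.re (inner ℝ (T x) (x : E) : ℝ) = (inner ℝ (T x) (x:E) : ℝ) := rfl
    rw [hre, hTdot, hnorm]
    exact hub _
  have hray_le : RCLike.re (inner ℝ (T w') (w' : E) : ℝ) / ‖(w' : E)‖ ^ 2 ≤ μ0 :=
    le_ciSup hbddR (⟨w', hw'ne⟩ : { x : E // x ≠ 0 })
  have hray_eq : RCLike.re (inner ℝ (T w') (w' : E) : ℝ) / ‖(w' : E)‖ ^ 2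
      = (w ⬝ᵥ M.mulVec w) / (w ⬝ᵥ w) := by
    have hre : RCLike.re (inner ℝ (T w') (w' : E) : ℝ) = (inner ℝ (T w') (w':E) : ℝ) := rfl
    rw [hre, hTdot, hnorm, hw']
    simp only [Equiv.apply_symm_apply]
  rw [lamMax]
  exact le_trans (hray_eq ▸ hray_le) hμ0_le

end spectral


lemma scalars (lam : ℝ) (hlam : 1 < lam) :
    ∃ r s p : ℝ, 0 < r ∧ r < 1 ∧ 0 < s ∧ p ≠ 0 ∧
      (lam - 1 = s^2 + s*r + s/r) ∧ (s*p = 2*s^2 + 2*s*r - (lam-1)) ∧ (s/(-p) = lam - 1) := by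
  have hlam1 : lam - 1 ≠ 0 := by linarith
  set c : ℝ := (Real.sqrt (lam^2+4*lam) - lam)/2 with hc
  have hq : (Real.sqrt (lam^2+4*lam))^2 = lam^2+4*lam :=
    Real.sq_sqrt (by nlinarith)
  have hqnn := Real.sqrt_nonneg (lam^2+4*lam)
  have hc_pos : 0 < c := by
    rw [hc]
    have : lam < Real.sqrt (lam^2+4*lam) := by nlinarith
    linarith
  have hc1 : c < 1 := by
    rw [hc]
    have : Real.sqrt (lam^2+4*lam) < lam + 2 := by nlinarith
    linarith
  have hkey : c^2 = lam*(1-c) := by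
    rw [hc]
    field_simp
    rw [show lam*(lam+4) = lam^2+4*lam by ring]
    nlinarith [hq]
  have hphi : 0 < c^2 + c - 1 := by nlinarith
  have hc2 : 0 < 1 - c^2 := by nlinarith
  set r : ℝ := Real.sqrt (1 - c^2) with hrdef
  have hr2 : r^2 = 1 - c^2 := Real.sq_sqrt (le_of_lt hc2)
  have hr_pos : 0 < r := Real.sqrt_pos.mpr hc2
  have hr0 : r ≠ 0 := ne_of_gt hr_pos
  have hr1 : r < 1 := by nlinarith [hr2, hr_pos]
  set s : ℝ := (c^2 + c - 1)/r with hsdef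
  have hs_pos : 0 < s := div_pos hphi hr_pos
  have hs0 : s ≠ 0 := ne_of_gt hs_pos
  set p : ℝ := -s/(lam-1) with hpdef
  have hp0 : p ≠ 0 := by
    rw [hpdef]
    exact div_ne_zero (neg_ne_zero.mpr hs0) hlam1
  have hsr : s * r = c^2 + c - 1 := by
    rw [hsdef]; field_simp
  have hlamc : (lam-1)*(1-c) = c^2+c-1 := by linear_combination (-1 : ℝ)*hkey
  have hs2r2 : s^2*r^2 = (c^2+c-1)^2 := by linear_combination (s*r + (c^2+c-1))*hsr
  have hE1 : lam - 1 = s^2 + s*r + s/r := by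
    have e3 : (s/r)*r^2 = s*r := by
      rw [pow_two, ← mul_assoc, div_mul_cancel₀ _ hr0]
    have e1 : (lam-1)*(r^2*(1-c)) = (c^2+c-1)*r^2 := by linear_combination r^2*hlamc
    have e2 : (s^2+s*r+s/r)*(r^2*(1-c))
        = ((c^2+c-1)^2 + (c^2+c-1)*r^2 + (c^2+c-1))*(1-c) := by
      linear_combination (1-c)*hs2r2 + ((1-c)*r^2)*hsr + (1-c)*e3 + (1-c)*hsr
    have hne : r^2*(1-c) ≠ 0 :=
      mul_ne_zero (pow_ne_zero 2 hr0) (by intro h; nlinarith)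
    refine mul_right_cancel₀ hne ?_
    rw [e1, e2, hr2]
    ring
  have hsum : (s + r)*r = c := by
    have : s*r + r^2 = c := by rw [hsr, hr2]; ring
    linear_combination this
  have hstep : (s/r)^2 = s^2 + (s^2+s*r)^2 := by
    have hur : (s/r)*r = s := div_mul_cancel₀ s hr0
    have e1 : (s/r)^2*r^2 = s^2 := by
      rw [← mul_pow, hur]
    have esc : (s^2+s*r)*r = s*c := by linear_combination s*hsum
    have e2 : (s^2+s*r)^2*r^2 = s^2*c^2 := by
      linear_combination ((s^2+s*r)*r + s*c)*esc
    have e3 : (s/r)^2*r^2 = (s^2 + (s^2+s*r)^2)*r^2 := by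
      rw [e1, add_mul, e2]
      linear_combination (-(s^2))*hr2
    exact mul_right_cancel₀ (pow_ne_zero 2 hr0) e3
  have hspE : s*p = 2*s^2 + 2*s*r - (lam-1) := by
    have hl : s*p*(lam-1) = -s^2 := by
      rw [hpdef]
      field_simp
    have h4 : (s*p)*(lam-1) = (2*s^2+2*s*r-(lam-1))*(lam-1) := by
      rw [hl, hE1]
      linear_combination hstep
    exact mul_right_cancel₀ hlam1 h4
  have hv : s/(-p) = lam - 1 := by
    rw [hpdef]
    field_simp
  exact ⟨r, s, p, hr_pos, hr1, hs_pos, hp0, hE1, hspE, hv⟩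


lemma defLap_transpose {V : Type*} [Fintype V] [DecidableEq V] (G : SimpleGraph V) (s : ℝ) :
    (defLap G s)ᵀ = defLap G s := by
  rw [defLap]
  letI := Classical.decRel G.Adj
  simp [Matrix.transpose_add, Matrix.transpose_sub, Matrix.transpose_smul,
    Matrix.transpose_one, Matrix.diagonal_transpose]

lemma dot_self_y (n : ℕ) (y : ℕ → ℝ) :
    (fun i : Fin (2*n+2) => y ↑i) ⬝ᵥ (fun i : Fin (2*n+2) => y ↑i)
      = ∑ k ∈ range (2*n+2), y k ^ 2 := by
  rw [dotProduct, ← Fin.sum_univ_eq_sum_range (fun k => y k^2) (2*n+2)]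
  exact Finset.sum_congr rfl (fun i _ => by ring)

set_option maxHeartbeats 2000000 in
lemma bounds (lam r s p : ℝ) (hlam : 1 < lam) (hr_pos : 0 < r) (hr1 : r < 1) (hs_pos : 0 < s)
    (hp0 : p ≠ 0) (hE1 : lam - 1 = s^2 + s*r + s/r)
    (hspE : s*p = 2*s^2 + 2*s*r - (lam-1)) (hv : s/(-p) = lam - 1)
    (n : ℕ) (hn : 1 ≤ n) :
    lam - 2*(lam-1)*(r^2)^n ≤ lamMax (defLap (T1nn n) s)
      ∧ lamMax (defLap (T1nn n) s) ≤ lam := by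
  have hr0 : r ≠ 0 := ne_of_gt hr_pos
  have hs0 : s ≠ 0 := ne_of_gt hs_pos
  have hsr_pos : 0 < s/r := div_pos hs_pos hr_pos
  have htip_nonneg : 0 ≤ lam - 1 - s/r := by nlinarith [mul_pos hs_pos hr_pos, sq_nonneg s]
  -- upper bound on the quadratic form
  have hub : ∀ x : Fin (2*n+2) → ℝ,
      x ⬝ᵥ (defLap (T1nn n) s).mulVec x ≤ lam * (x ⬝ᵥ x) := by
    intro x
    have hxy : x = fun i : Fin (2*n+2) => (fun k : ℕ => if h : k < 2*n+2 then x ⟨k, h⟩ else 0) ↑i := by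
      funext i
      simp [i.isLt]
    set y : ℕ → ℝ := fun k => if h : k < 2*n+2 then x ⟨k, h⟩ else 0 with hy
    rw [hxy, quad_form n hn s y, dot_self_y n y]
    have hM := master n hn lam s r p hs0 hr0 hp0 hE1 hspE hv y
    have h1 : 0 ≤ s/(-p) := by rw [hv]; linarith
    have hxx : ∀ m M : ℕ, 0 ≤ ∑ k ∈ Ico m M, (s/r)*(r*y k + y (k+1))^2 :=
      fun m M => Finset.sum_nonneg (fun k _ => mul_nonneg (le_of_lt hsr_pos) (sq_nonneg _))
    have hRHS : 0 ≤ (s/(-p)) * (p*y 0 - y 1)^2 + (s/r)*(r*y 0 + y 2)^2 + (s/r)*(r*y 0 + y (n+2))^2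
      + (∑ k ∈ Ico 2 (n+1), (s/r)*(r*y k + y (k+1))^2)
      + (∑ k ∈ Ico (n+2) (2*n+1), (s/r)*(r*y k + y (k+1))^2)
      + (lam - 1 - s/r) * (y (n+1)^2 + y (2*n+1)^2) := by
      refine add_nonneg (add_nonneg (add_nonneg (add_nonneg (add_nonneg ?_ ?_) ?_) (hxx _ _)) (hxx _ _)) ?_
      · exact mul_nonneg h1 (sq_nonneg _)
      · exact mul_nonneg (le_of_lt hsr_pos) (sq_nonneg _)
      · exact mul_nonneg (le_of_lt hsr_pos) (sq_nonneg _)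
      · exact mul_nonneg htip_nonneg (by positivity)
    have hgoal : (1 - s^2) * (∑ k ∈ range (2*n+2), y k ^ 2)
      + s^2 * (ES n (fun a b => y a ^ 2) + ES n (fun a b => y b ^ 2))
      - s * (2 * ES n (fun a b => y a * y b))
      = lam * (∑ k ∈ range (2*n+2), y k ^ 2)
        - ((s/(-p)) * (p*y 0 - y 1)^2 + (s/r)*(r*y 0 + y 2)^2 + (s/r)*(r*y 0 + y (n+2))^2
          + (∑ k ∈ Ico 2 (n+1), (s/r)*(r*y k + y (k+1))^2)
          + (∑ k ∈ Ico (n+2) (2*n+1), (s/r)*(r*y k + y (k+1))^2)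
          + (lam - 1 - s/r) * (y (n+1)^2 + y (2*n+1)^2)) := by
      linear_combination (-1 : ℝ) * hM
    rw [hgoal]
    linarith [hRHS]
  have hupper : lamMax (defLap (T1nn n) s) ≤ lam := lamMax_le_of_ub _ lam (by linarith) hub
  -- the test vector
  set Y : ℕ → ℝ := fun k => if k = 0 then 1 else if k = 1 then p
      else if k ≤ n+1 then (-r)^(k-1) else (-r)^(k-n-1) with hY
  have hY0 : Y 0 = 1 := by simp [hY]
  have hY1 : Y 1 = p := by simp [hY]
  have hY2 : Y 2 = -r := by
    simp only [hY]
    rw [if_neg (by omega), if_neg (by omega), if_pos (by omega)]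
    norm_num
  have hYn2 : Y (n+2) = -r := by
    simp only [hY]
    rw [if_neg (by omega), if_neg (by omega), if_neg (by omega),
        show n+2-n-1 = 1 by omega, pow_one]
  have hYn1 : Y (n+1) = (-r)^n := by
    simp only [hY]
    rw [if_neg (by omega), if_neg (by omega), if_pos (by omega), show n+1-1 = n by omega]
  have hY2n1 : Y (2*n+1) = (-r)^n := by
    simp only [hY]
    rw [if_neg (by omega), if_neg (by omega), if_neg (by omega), show 2*n+1-n-1 = n by omega]
  have hz1 : p*Y 0 - Y 1 = 0 := by rw [hY0, hY1]; ring
  have hz2 : r*Y 0 + Y 2 = 0 := by rw [hY0, hY2]; ring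
  have hz3 : r*Y 0 + Y (n+2) = 0 := by rw [hY0, hYn2]; ring
  have hzs1 : ∀ k ∈ Ico 2 (n+1), (s/r)*(r*Y k + Y (k+1))^2 = 0 := by
    intro k hk
    rw [Finset.mem_Ico] at hk
    have hYk : Y k = (-r)^(k-1) := by
      simp only [hY]
      rw [if_neg (by omega), if_neg (by omega), if_pos (by omega)]
    have hYk1 : Y (k+1) = (-r)^k := by
      simp only [hY]
      rw [if_neg (by omega), if_neg (by omega), if_pos (by omega), show k+1-1 = k by omega]
    have hps : (-r)^k = (-r)^(k-1) * (-r) := by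
      rw [← pow_succ]
      congr 1
      omega
    rw [hYk, hYk1, hps]
    ring
  have hzs2 : ∀ k ∈ Ico (n+2) (2*n+1), (s/r)*(r*Y k + Y (k+1))^2 = 0 := by
    intro k hk
    rw [Finset.mem_Ico] at hk
    have hYk : Y k = (-r)^(k-n-1) := by
      simp only [hY]
      rw [if_neg (by omega), if_neg (by omega), if_neg (by omega)]
    have hYk1 : Y (k+1) = (-r)^(k-n) := by
      simp only [hY]
      rw [if_neg (by omega), if_neg (by omega), if_neg (by omega), show k+1-n-1 = k-n by omega]
    have hps : (-r)^(k-n) = (-r)^(k-n-1) * (-r) := by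
      rw [← pow_succ]
      congr 1
      omega
    rw [hYk, hYk1, hps]
    ring
  have hMY := master n hn lam s r p hs0 hr0 hp0 hE1 hspE hv Y
  rw [hz1, hz2, hz3, Finset.sum_eq_zero hzs1, Finset.sum_eq_zero hzs2, hYn1, hY2n1] at hMY
  have hpw : ((-r)^n)^2 = (r^2)^n := by
    rw [← pow_mul, mul_comm n 2, pow_mul, neg_sq]
  rw [hpw] at hMY
  set w : Fin (2*n+2) → ℝ := fun i => Y ↑i with hwdef
  have hw0 : w ≠ 0 := by
    intro h
    have h2 := congrFun h (⟨0, by omega⟩ : Fin (2*n+2))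
    rw [hwdef] at h2
    simp only at h2
    rw [Pi.zero_apply] at h2
    rw [show Y ((⟨0, by omega⟩ : Fin (2*n+2)) : ℕ) = Y 0 from rfl, hY0] at h2
    exact one_ne_zero h2
  set S : ℝ := ∑ k ∈ range (2*n+2), Y k ^ 2 with hSdef
  have hwMw : w ⬝ᵥ (defLap (T1nn n) s).mulVec w
      = lam * S - (lam - 1 - s/r) * (2 * (r^2)^n) := by
    rw [hwdef, quad_form n hn s Y, ← hSdef]
    linear_combination (-1 : ℝ) * hMY
  have hS1 : (1:ℝ) ≤ S := by
    have h0 : Y 0 ^ 2 = 1 := by rw [hY0]; norm_num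
    have h2 : Y 0 ^ 2 ≤ S := Finset.single_le_sum (f := fun k => Y k ^ 2)
      (fun i _ => sq_nonneg _) (Finset.mem_range.mpr (show 0 < 2*n+2 by omega))
    linarith [h2, h0.symm.le, h0.le]
  have hww : w ⬝ᵥ w = S := dot_self_y n Y
  have hray := lamMax_ge_rayleigh (defLap (T1nn n) s) (defLap_transpose _ _) lam hub w hw0
  rw [hwMw, hww] at hray
  refine ⟨le_trans ?_ hray, hupper⟩
  rw [le_div_iff₀ (by linarith : (0:ℝ) < S)]
  have hq0 : (0:ℝ) ≤ (r^2)^n := by positivity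
  have hin : (0:ℝ) ≤ (lam-1)*S - (lam-1-s/r) := by nlinarith [hS1, hsr_pos]
  nlinarith [mul_nonneg hq0 hin]

theorem stmt0' (lam : ℝ) (hlam : 1 < lam) :
    ∃ s : ℝ, 0 < s ∧
      Filter.Tendsto (fun n : ℕ => lamMax (defLap (T1nn n) s)) Filter.atTop (nhds lam) := by
  obtain ⟨r, s, p, hr_pos, hr1, hs_pos, hp0, hE1, hspE, hv⟩ := scalars lam hlam
  refine ⟨s, hs_pos, ?_⟩
  have hb := bounds lam r s p hlam hr_pos hr1 hs_pos hp0 hE1 hspE hv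
  have hθ0 : (0:ℝ) ≤ r^2 := sq_nonneg r
  have hθ1 : r^2 < 1 := by nlinarith
  have hlo : Filter.Tendsto (fun n : ℕ => lam - 2*(lam-1)*(r^2)^n) Filter.atTop (nhds lam) := by
    have h1 : Filter.Tendsto (fun n : ℕ => (r^2)^n) Filter.atTop (nhds 0) :=
      tendsto_pow_atTop_nhds_zero_of_lt_one hθ0 hθ1
    have h2 : Filter.Tendsto (fun n : ℕ => lam - 2*(lam-1)*(r^2)^n) Filter.atTop
        (nhds (lam - 2*(lam-1)*0)) :=
      Filter.Tendsto.sub tendsto_const_nhds (h1.const_mul _)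
    simpa using h2
  refine tendsto_of_tendsto_of_tendsto_of_le_of_le' hlo tendsto_const_nhds ?_ ?_
  · filter_upwards [Filter.eventually_ge_atTop 1] with n hn
    exact (hb n hn).1
  · filter_upwards [Filter.eventually_ge_atTop 1] with n hn
    exact (hb n hn).2

/-- for every real `λ > 1` there is an `s > 0` such that
`ρ(M_{T_{1,n,n}}(s)) → λ` as `n → ∞`; in particular every real number greater
than 1 is an `s`-deformed Laplacian limit point for some `s > 0`. -/
theorem stmt0 (lam : ℝ) (hlam : 1 < lam) :
    ∃ s : ℝ, 0 < s ∧
      Filter.Tendsto (fun n : ℕ => lamMax (defLap (T1nn n) s)) Filter.atTop (nhds lam) :=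
  stmt0' lam hlam
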